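/- arXiv:2503.20931 — 3 statements merged into one kernel-verified Lean document; each statement's English description precedes it below -/
import Mathlib

section
/- For every function f : X → ℝ∪{±∞} one has (eco f)^c = f^c, and for every function k : W → ℝ∪{±∞} one has (e'co k)^{c'} = k^{c'}, where e'co k denotes the largest e'-convex minorant of k. -/
open scoped Pointwise

noncomputable section

variable {X : Type*} [AddCommGroup X] [Module ℝ X] [TopologicalSpace X]

/-- `Wsp X` is the parameter space `X* × X* × ℝ` used in the `c`-conjugation scheme. -/
abbrev Wsp (X : Type*) [AddCommGroup X] [Module ℝ X] [TopologicalSpace X] :=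
  (X →L[ℝ] ℝ) × (X →L[ℝ] ℝ) × ℝ

/-- The coupling function `c(x,(x*,y*,α)) = ⟨x,x*⟩` if `⟨x,y*⟩ < α`, `+∞` otherwise. -/
def coupling (x : X) (w : Wsp X) : EReal :=
  if w.2.1 x < w.2.2 then ((w.1 x : ℝ) : EReal) else ⊤

/-- The `c`-conjugate of `f : X → ℝ∪{±∞}`.  (EReal subtraction gives priority to `-∞`.) -/
def cConj (f : X → EReal) : Wsp X → EReal :=
  fun w => ⨆ x : X, coupling x w - f x

/-- The `c'`-conjugate of `k : W → ℝ∪{±∞}`. -/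
def cConj' (k : Wsp X → EReal) : X → EReal :=
  fun x => ⨆ w : Wsp X, coupling x w - k w

/-- Epigraph of an extended-real-valued function, as a subset of `Y × ℝ`. -/
def epiE {Y : Type*} (f : Y → EReal) : Set (Y × ℝ) :=
  {p | f p.1 ≤ (p.2 : EReal)}

/-- A set `C` is evenly convex (e-convex) if every point outside `C` can be strictly
separated from `C` by a continuous linear functional. -/
def EConvexSet {Y : Type*} [AddCommGroup Y] [Module ℝ Y] [TopologicalSpace Y]
    (C : Set Y) : Prop :=
  ∀ x₀ ∉ C, ∃ φ : Y →L[ℝ] ℝ, ∀ x ∈ C, φ x < φ x₀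

/-- A function is e-convex if its epigraph is an e-convex subset of `X × ℝ`. -/
def EConvexFn (f : X → EReal) : Prop := EConvexSet (epiE f)

/-- The e-convex hull of a function: its largest e-convex minorant. -/
def eco (f : X → EReal) : X → EReal :=
  fun x => ⨆ g : {g : X → EReal // EConvexFn g ∧ g ≤ f}, g.1 x

/-- A function `k : W → ℝ∪{±∞}` is e'-convex if it is the pointwise supremum of a family
of functions of the form `w ↦ c(x,w) - β` with `x ∈ X`, `β ∈ ℝ`. -/
def E'ConvexFn (k : Wsp X → EReal) : Prop :=
  ∃ S : Set (X × ℝ), k = fun w => ⨆ p ∈ S, (coupling p.1 w - ((p.2 : ℝ) : EReal))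

/-- The e'-convex hull of a function: its largest e'-convex minorant. -/
def e'co (k : Wsp X → EReal) : Wsp X → EReal :=
  fun w => ⨆ g : {g : Wsp X → EReal // E'ConvexFn g ∧ g ≤ k}, g.1 w

/-- A subset of `W × ℝ` is e'-convex if it is the epigraph of an e'-convex function. -/
def E'ConvexSet (D : Set (Wsp X × ℝ)) : Prop :=
  ∃ k : Wsp X → EReal, E'ConvexFn k ∧ D = epiE k

/-- The e'-convex hull of a set: the smallest e'-convex set containing it. -/
def e'coSet (D : Set (Wsp X × ℝ)) : Set (Wsp X × ℝ) :=
  ⋂₀ {E : Set (Wsp X × ℝ) | E'ConvexSet E ∧ D ⊆ E}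

/-- A function is proper if it never takes the value `-∞` and is not identically `+∞`. -/
def ProperFn {Y : Type*} (f : Y → EReal) : Prop :=
  (∀ x, f x ≠ ⊥) ∧ ∃ x, f x ≠ ⊤

/-- Convexity of an extended-real-valued function, via convexity of its epigraph. -/
def ConvexFn (f : X → EReal) : Prop := Convex ℝ (epiE f)

open Classical in
/-- Indicator function: `0` on `D`, `+∞` elsewhere. -/
def indicatorE {Y : Type*} (D : Set Y) : Y → EReal :=
  fun x => if x ∈ D then 0 else ⊤

/-- The `ε`-`c`-subdifferential of `f` at `xb`; empty if `f xb ∉ ℝ`. -/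
def cSubdiff (f : X → EReal) (ε : ℝ) (xb : X) : Set (Wsp X) :=
  {w | (∃ r : ℝ, f xb = (r : EReal)) ∧ w.2.1 xb < w.2.2 ∧
    ∀ x : X, coupling x w - coupling xb w - (ε : EReal) ≤ f x - f xb}

/-- The e-affine function with parameters `(x', y', α, β)`. -/
def eAffine (x' y' : X →L[ℝ] ℝ) (α β : ℝ) : X → EReal :=
  fun x => if y' x < α then ((x' x - β : ℝ) : EReal) else ⊤

/-- A function is e-affine if it equals `eAffine x' y' α β` for some parameters. -/
def IsEAffine (a : X → EReal) : Prop :=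
  ∃ x' y' α β, a = eAffine x' y' α β

/-- The set `Ẽ_{f₁,f₂}` of e-affine functions obtained by adding the parameters of an
e-affine minorant of `f₁` and one of `f₂`. -/
def ETilde (f₁ f₂ : X → EReal) : Set (X → EReal) :=
  {a | ∃ x₁ y₁ : X →L[ℝ] ℝ, ∃ α₁ β₁ : ℝ, ∃ x₂ y₂ : X →L[ℝ] ℝ, ∃ α₂ β₂ : ℝ,
    eAffine x₁ y₁ α₁ β₁ ≤ f₁ ∧ eAffine x₂ y₂ α₂ β₂ ≤ f₂ ∧
    a = eAffine (x₁ + x₂) (y₁ + y₂) (α₁ + α₂) (β₁ + β₂)}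

/-- The additivity condition (AC): `eco (f₁ + f₂) = sup {a : a ∈ Ẽ_{f₁,f₂}}`. -/
def ACcond (f₁ f₂ : X → EReal) : Prop :=
  eco (fun x => f₁ x + f₂ x) = fun x => ⨆ a ∈ ETilde f₁ f₂, a x

/-- Infimal convolution of two functions on `W`. -/
def infConv (k₁ k₂ : Wsp X → EReal) : Wsp X → EReal :=
  fun w => ⨅ w' : Wsp X, k₁ w' + k₂ (w - w')

/-- The DC objective `f - g`, defined to be `+∞` outside `dom f`. -/
def dcDiff (f g : X → EReal) : X → EReal :=
  fun x => if f x = ⊤ then ⊤ else f x - g x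

/-- `λh := Σ_{t∈T} λ_t h_t` for a nonnegative generalized finite sequence `λ`. -/
def lamh {T : Type*} (lam : T →₀ ℝ) (h : T → X → EReal) : X → EReal :=
  fun x => ∑ t ∈ lam.support, ((lam t : ℝ) : EReal) * h t x

/-- The set `B := ∩_{λ∈ℝ^{(T)}_+} {x : (eco λh)(x) ≤ 0}`. -/
def Bset {T : Type*} (h : T → X → EReal) : Set X :=
  {x | ∀ lam : T →₀ ℝ, (∀ t, 0 ≤ lam t) → eco (lamh lam h) x ≤ 0}

/-- The set `K := ∪_{λ∈ℝ^{(T)}_+} epi (λh)^c`. -/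
def Kset {T : Type*} (h : T → X → EReal) : Set (Wsp X × ℝ) :=
  ⋃ lam ∈ {l : T →₀ ℝ | ∀ t, 0 ≤ l t}, epiE (cConj (lamh lam h))



/-- Auxiliary: `c - v ≤ β` implies `c - β ≤ v` in `EReal`. -/
lemma aux_lemA (c : EReal) (β : ℝ) (v : EReal) (h : c - v ≤ (β : EReal)) : c - β ≤ v := by
  induction c using EReal.rec with
  | bot => simp [EReal.bot_sub]
  | top =>
    induction v using EReal.rec with
    | bot => simp [EReal.top_sub_bot] at h
    | top => simp
    | coe s => simp [EReal.top_sub_coe] at h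
  | coe r =>
    induction v using EReal.rec with
    | bot => simp [EReal.coe_sub_bot] at h
    | top => simp
    | coe s =>
      rw [← EReal.coe_sub] at h ⊢
      rw [EReal.coe_le_coe_iff] at h ⊢
      linarith

/-- Auxiliary: `c - (c - β) ≤ β` in `EReal`. -/
lemma aux_lemB (c : EReal) (β : ℝ) : c - (c - (β : EReal)) ≤ (β : EReal) := by
  induction c using EReal.rec with
  | bot => simp [EReal.bot_sub]
  | top => simp [EReal.top_sub_coe, EReal.sub_top]
  | coe r => rw [← EReal.coe_sub, ← EReal.coe_sub, EReal.coe_le_coe_iff]; linarith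

lemma aux_lemLe {a b : EReal} (h : ∀ β : ℝ, b ≤ (β : EReal) → a ≤ (β : EReal)) : a ≤ b :=
  EReal.le_of_forall_lt_iff_le.1 fun z hz => h z hz.le

/-- The function `x ↦ c(x,w) - β` is e-convex. -/
lemma aux_econvex (w : Wsp X) (β : ℝ) :
    EConvexFn (fun x => coupling x w - ((β : ℝ) : EReal)) := by
  intro p₀ hp₀
  simp only [epiE, Set.mem_setOf_eq, coupling] at hp₀
  by_cases hy : w.2.1 p₀.1 < w.2.2
  · rw [if_pos hy, ← EReal.coe_sub, EReal.coe_le_coe_iff, not_le] at hp₀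
    refine ⟨(w.1).comp (ContinuousLinearMap.fst ℝ X ℝ) - (ContinuousLinearMap.snd ℝ X ℝ), ?_⟩
    intro p hp
    simp only [epiE, Set.mem_setOf_eq, coupling] at hp
    by_cases hy' : w.2.1 p.1 < w.2.2
    · rw [if_pos hy', ← EReal.coe_sub, EReal.coe_le_coe_iff] at hp
      simp only [ContinuousLinearMap.sub_apply, ContinuousLinearMap.comp_apply,
        ContinuousLinearMap.coe_fst', ContinuousLinearMap.coe_snd']
      linarith
    · rw [if_neg hy'] at hp
      simp [EReal.top_sub_coe] at hp
  · refine ⟨(w.2.1).comp (ContinuousLinearMap.fst ℝ X ℝ), ?_⟩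
    intro p hp
    simp only [epiE, Set.mem_setOf_eq, coupling] at hp
    by_cases hy' : w.2.1 p.1 < w.2.2
    · simp only [ContinuousLinearMap.comp_apply, ContinuousLinearMap.coe_fst']
      exact lt_of_lt_of_le hy' (not_lt.1 hy)
    · rw [if_neg hy'] at hp
      simp [EReal.top_sub_coe] at hp

/-- The function `w ↦ c(x,w) - β` is e'-convex. -/
lemma aux_e'convex (x : X) (β : ℝ) :
    E'ConvexFn (fun w : Wsp X => coupling x w - ((β : ℝ) : EReal)) := by
  refine ⟨{(x, β)}, ?_⟩
  funext w
  simp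

/-- `(eco f)^c = f^c` and `(e'co k)^{c'} = k^{c'}`. -/
theorem stmt0 [IsTopologicalAddGroup X] [ContinuousSMul ℝ X] [LocallyConvexSpace ℝ X] [T2Space X]
    (f : X → EReal) (k : Wsp X → EReal) :
    cConj (eco f) = cConj f ∧ cConj' (e'co k) = cConj' k := by
  constructor
  · funext w
    apply le_antisymm
    · apply aux_lemLe
      intro β hβ
      set g : X → EReal := fun x => coupling x w - (β : EReal) with hg
      have hgf : g ≤ f := by
        intro x
        refine aux_lemA _ _ _ (le_trans ?_ hβ)
        exact le_iSup (fun x => coupling x w - f x) x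
      have hgeco : g ≤ eco f := by
        intro x
        exact le_iSup (fun t : {g : X → EReal // EConvexFn g ∧ g ≤ f} => t.1 x)
          ⟨g, aux_econvex w β, hgf⟩
      refine iSup_le fun x => ?_
      calc coupling x w - eco f x ≤ coupling x w - g x := EReal.sub_le_sub le_rfl (hgeco x)
        _ ≤ (β : EReal) := aux_lemB _ _
    · refine iSup_le fun x => le_trans (EReal.sub_le_sub le_rfl ?_)
        (le_iSup (fun x => coupling x w - eco f x) x)
      exact iSup_le fun t => t.2.2 x
  · funext x
    apply le_antisymm
    · apply aux_lemLe
      intro β hβ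
      set g : Wsp X → EReal := fun w => coupling x w - (β : EReal) with hg
      have hgk : g ≤ k := by
        intro w
        refine aux_lemA _ _ _ (le_trans ?_ hβ)
        exact le_iSup (fun w => coupling x w - k w) w
      have hgeco : g ≤ e'co k := by
        intro w
        exact le_iSup (fun t : {g : Wsp X → EReal // E'ConvexFn g ∧ g ≤ k} => t.1 w)
          ⟨g, aux_e'convex x β, hgk⟩
      refine iSup_le fun w => ?_
      calc coupling x w - e'co k w ≤ coupling x w - g w := EReal.sub_le_sub le_rfl (hgeco w)
        _ ≤ (β : EReal) := aux_lemB _ _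
    · refine iSup_le fun w => le_trans (EReal.sub_le_sub le_rfl ?_)
        (le_iSup (fun w => coupling x w - e'co k w) w)
      exact iSup_le fun t => t.2.2 w

end
end

section
/- Let f : X → ℝ∪{±∞} be a proper function. Then for every ε ≥ 0 and every x ∈ X, ∂_{c,ε}f(x) ⊆ ∂_{c,ε}(eco f)(x). -/
open scoped Pointwise

noncomputable section

variable {X : Type*} [AddCommGroup X] [Module ℝ X] [TopologicalSpace X]

lemma mem_epiE_eAffine {x' y' : X →L[ℝ] ℝ} {α β : ℝ} {p : X × ℝ} :
    p ∈ epiE (eAffine x' y' α β) ↔ y' p.1 < α ∧ x' p.1 - β ≤ p.2 := by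
  simp only [epiE, eAffine, Set.mem_setOf_eq]
  split_ifs with h
  · simp only [h, true_and]
    exact EReal.coe_le_coe_iff
  · simp [h, top_le_iff]

lemma eAffine_econvexFn (x' y' : X →L[ℝ] ℝ) (α β : ℝ) : EConvexFn (eAffine x' y' α β) := by
  intro p₀ hp₀
  rw [mem_epiE_eAffine] at hp₀
  push_neg at hp₀
  by_cases h : y' p₀.1 < α
  · refine ⟨x'.comp (ContinuousLinearMap.fst ℝ X ℝ) - ContinuousLinearMap.snd ℝ X ℝ, ?_⟩
    intro p hp
    rw [mem_epiE_eAffine] at hp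
    simp only [ContinuousLinearMap.sub_apply, ContinuousLinearMap.coe_comp',
      Function.comp_apply, ContinuousLinearMap.coe_fst', ContinuousLinearMap.coe_snd']
    have h2 := hp₀ h
    linarith [hp.2]
  · refine ⟨y'.comp (ContinuousLinearMap.fst ℝ X ℝ), ?_⟩
    intro p hp
    rw [mem_epiE_eAffine] at hp
    simp only [ContinuousLinearMap.coe_comp', Function.comp_apply,
      ContinuousLinearMap.coe_fst']
    linarith [hp.1, not_lt.mp h]

lemma eco_le (f : X → EReal) : ∀ z, eco f z ≤ f z :=
  fun z => iSup_le fun g => g.2.2 z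

lemma le_eco {f g : X → EReal} (hg : EConvexFn g) (hgf : g ≤ f) : ∀ z, g z ≤ eco f z :=
  fun z => le_iSup (fun (g : {g : X → EReal // EConvexFn g ∧ g ≤ f}) => g.1 z) ⟨g, hg, hgf⟩

/-- `∂_{c,ε} f(x) ⊆ ∂_{c,ε} (eco f)(x)`. -/
theorem stmt1 [IsTopologicalAddGroup X] [ContinuousSMul ℝ X] [LocallyConvexSpace ℝ X] [T2Space X]
    (f : X → EReal) (hf : ProperFn f) (ε : ℝ) (hε : 0 ≤ ε) (x : X) :
    cSubdiff f ε x ⊆ cSubdiff (eco f) ε x := by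
  rintro w ⟨⟨r, hr⟩, hlt, hineq⟩
  set x' := w.1 with hx'
  set y' := w.2.1 with hy'
  set α := w.2.2 with hα
  obtain ⟨β, hβ⟩ : ∃ β : ℝ, β = x' x + ε - r := ⟨_, rfl⟩
  have hcx : coupling x w = ((x' x : ℝ) : EReal) := by simp only [coupling]; exact if_pos hlt
  -- eAffine x' y' α β ≤ f
  have hmin : eAffine x' y' α β ≤ f := by
    intro z
    have h := hineq z
    rw [hr, hcx] at h
    by_cases hz : y' z < α
    · have hcz : coupling z w = ((x' z : ℝ) : EReal) := by simp only [coupling]; exact if_pos hz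
      rw [hcz] at h
      rw [show ((x' z : ℝ) : EReal) - ((x' x : ℝ) : EReal) - (ε : EReal)
          = ((x' z - x' x - ε : ℝ) : EReal) by push_cast; ring] at h
      simp only [eAffine, hz, if_pos]
      rcases eq_or_ne (f z) ⊤ with hfz | hfz
      · rw [hfz]; exact le_top
      · lift f z to ℝ using ⟨hfz, hf.1 z⟩ with s hfs
        have h' : x' z - x' x - ε ≤ s - r := by exact_mod_cast h
        exact EReal.coe_le_coe_iff.mpr (by rw [hβ]; linarith)
    · have hcz : coupling z w = ⊤ := by simp only [coupling]; exact if_neg hz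
      rw [hcz] at h
      rw [show (⊤ : EReal) - ((x' x : ℝ) : EReal) - (ε : EReal) = ⊤ by
        rw [EReal.top_sub_coe, EReal.top_sub_coe]] at h
      have : f z = ⊤ := by
        by_contra hfz
        lift f z to ℝ using ⟨hfz, hf.1 z⟩ with s hfs
        have h' : (⊤ : EReal) ≤ ((s - r : ℝ) : EReal) := by push_cast; exact h
        exact EReal.coe_ne_top _ (top_le_iff.mp h')
      simp [eAffine, hz, this]
  have hle_eco := le_eco (eAffine_econvexFn x' y' α β) hmin
  have haff : ∀ z, y' z < α → ((x' z - β : ℝ) : EReal) ≤ eco f z := by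
    intro z hz
    have := hle_eco z
    simpa [eAffine, hz] using this
  -- eco f x is real
  have hlow : ((r - ε : ℝ) : EReal) ≤ eco f x := by
    have := haff x hlt
    rwa [show x' x - β = r - ε by rw [hβ]; ring] at this
  have hupp : eco f x ≤ ((r : ℝ) : EReal) := hr ▸ eco_le f x
  have hnt : eco f x ≠ ⊤ := fun h => by
    rw [h] at hupp; exact EReal.coe_ne_top r (top_le_iff.mp hupp)
  have hnb : eco f x ≠ ⊥ := fun h => by
    rw [h, le_bot_iff] at hlow; exact EReal.coe_ne_bot _ hlow
  obtain ⟨s, hs, hsr, hrs⟩ : ∃ s : ℝ, eco f x = s ∧ s ≤ r ∧ r - ε ≤ s := by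
    lift eco f x to ℝ using ⟨hnt, hnb⟩ with s hse
    exact ⟨s, rfl, by exact_mod_cast hupp, by exact_mod_cast hlow⟩
  refine ⟨⟨s, hs⟩, hlt, fun z => ?_⟩
  rw [hs, hcx]
  by_cases hz : y' z < α
  · have hcz : coupling z w = ((x' z : ℝ) : EReal) := by simp only [coupling]; exact if_pos hz
    rw [hcz]
    have hz' := haff z hz
    rcases eq_or_ne (eco f z) ⊤ with he | he
    · rw [he, EReal.top_sub_coe]; exact le_top
    · have hnb' : eco f z ≠ ⊥ := fun h => by
        rw [h, le_bot_iff] at hz'; exact EReal.coe_ne_bot _ hz'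
      lift eco f z to ℝ using ⟨he, hnb'⟩ with u hu
      have hz'' : x' z - β ≤ u := by exact_mod_cast hz'
      have : x' z - x' x - ε ≤ u - s := by rw [hβ] at hz''; linarith
      exact_mod_cast this
  · have hcz : coupling z w = ⊤ := by simp only [coupling]; exact if_neg hz
    have htop : eco f z = ⊤ := by
      have := hle_eco z
      simp only [eAffine, hz, if_neg, not_false_iff] at this
      exact top_le_iff.mp (by simpa using this)
    rw [htop, show (⊤ : EReal) - ((s : ℝ) : EReal) = ⊤ by rw [EReal.top_sub_coe]]
    exact le_top

end
end

section
/- Let f, g : X → ℝ∪{±∞} be proper functions with g e-convex and dom f ⊆ dom g. Then E_{f−g} ⊆ E_f − E_g, i.e. every e-affine minorant a of f − g can be written as a = a' − b with a' ∈ E_f and b ∈ E_g. -/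
open scoped Pointwise

noncomputable section

variable {X : Type*} [AddCommGroup X] [Module ℝ X] [TopologicalSpace X]

/-- `E_{f-g} ⊆ E_f - E_g` when `g` is e-convex and `dom f ⊆ dom g`. -/
theorem stmt5 [IsTopologicalAddGroup X] [ContinuousSMul ℝ X] [LocallyConvexSpace ℝ X] [T2Space X]
    (f g : X → EReal) (hfp : ProperFn f) (hgp : ProperFn g) (hge : EConvexFn g)
    (hdom : {x : X | f x ≠ ⊤} ⊆ {x : X | g x ≠ ⊤}) :
    ∀ a : X → EReal, IsEAffine a → a ≤ dcDiff f g →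
      ∃ a' b : X → EReal, IsEAffine a' ∧ a' ≤ f ∧ IsEAffine b ∧ b ≤ g ∧
        ∀ x : X, a x = a' x - b x := by
  rintro a ⟨x', y', α, β, rfl⟩ hale
  -- find a point where g is finite
  obtain ⟨x₀, hx₀⟩ := hgp.2
  have hgx₀ : g x₀ = ((g x₀).toReal : EReal) := (EReal.coe_toReal hx₀ (hgp.1 x₀)).symm
  set r : ℝ := (g x₀).toReal with hrdef
  have hp₀ : (x₀, r - 1) ∉ epiE g := by
    intro h
    have : g x₀ ≤ ((r - 1 : ℝ) : EReal) := h
    rw [hgx₀] at this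
    have : r ≤ r - 1 := EReal.coe_le_coe_iff.mp this
    linarith
  obtain ⟨φ, hφ⟩ := hge _ hp₀
  set u : X →L[ℝ] ℝ := φ.comp (ContinuousLinearMap.inl ℝ X ℝ) with hu
  set c : ℝ := φ (0, 1) with hc
  have hrep : ∀ (x : X) (t : ℝ), φ (x, t) = u x + t * c := by
    intro x t
    have h1 : (x, t) = (x, (0 : ℝ)) + ((0 : X), t) := by simp
    have h2 : ((0 : X), t) = t • ((0 : X), (1 : ℝ)) := by simp
    rw [h1, map_add, h2, map_smul]
    simp [hu, hc]
  have hcneg : c < 0 := by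
    have hmem : (x₀, r) ∈ epiE g := by
      show g x₀ ≤ ((r : ℝ) : EReal); rw [hgx₀]
    have := hφ _ hmem
    rw [hrep, hrep] at this
    nlinarith
  set K : ℝ := φ (x₀, r - 1) with hK
  have hKrep : K = u x₀ + (r - 1) * c := by rw [hK, hrep]
  -- strict affine minorant of g on its domain
  have hmin : ∀ (x : X) (s : ℝ), g x = (s : EReal) → K / c - u x / c < s := by
    intro x s hs
    have hmem : (x, s) ∈ epiE g := by show g x ≤ ((s : ℝ) : EReal); rw [hs]
    have h1 := hφ _ hmem
    rw [hrep] at h1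
    -- u x + s * c < K, c < 0
    rw [div_sub_div_same, div_lt_iff_of_neg hcneg]
    linarith
  -- define b
  set xb : X →L[ℝ] ℝ := (-c⁻¹) • u with hxb
  set βb : ℝ := -(K / c) with hβb
  have hxbval : ∀ x : X, xb x - βb = K / c - u x / c := by
    intro x
    simp [hxb, hβb]
    ring
  set b : X → EReal := eAffine xb 0 1 βb with hb
  have hbval : ∀ x : X, b x = ((xb x - βb : ℝ) : EReal) := by
    intro x
    simp [hb, eAffine]
  have hbleg : b ≤ g := by
    intro x
    rcases eq_or_ne (g x) ⊤ with h | h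
    · rw [h]; exact le_top
    · have hgx : g x = (((g x).toReal : ℝ) : EReal) := (EReal.coe_toReal h (hgp.1 x)).symm
      rw [hbval, hgx]
      rw [EReal.coe_le_coe_iff]
      rw [hxbval]
      exact le_of_lt (hmin x _ hgx)
  -- define a'
  set a' : X → EReal := eAffine (x' + xb) y' α (β + βb) with ha'
  have hsum : ∀ x : X, a' x = eAffine x' y' α β x + b x := by
    intro x
    rw [hbval]
    by_cases hcond : y' x < α
    · simp only [ha', eAffine, hcond, if_pos]
      rw [← EReal.coe_add, EReal.coe_eq_coe_iff]
      simp
      ring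
    · simp only [ha', eAffine, hcond, if_neg, if_false]
      rw [EReal.top_add_coe]
  refine ⟨a', b, ⟨_, _, _, _, rfl⟩, ?_, ⟨_, _, _, _, rfl⟩, hbleg, ?_⟩
  · -- a' ≤ f
    intro x
    rcases eq_or_ne (f x) ⊤ with h | h
    · rw [h]; exact le_top
    · have hgne : g x ≠ ⊤ := hdom h
      have hfx : f x = (((f x).toReal : ℝ) : EReal) := (EReal.coe_toReal h (hfp.1 x)).symm
      have hgx : g x = (((g x).toReal : ℝ) : EReal) := (EReal.coe_toReal hgne (hgp.1 x)).symm
      have hax := hale x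
      have hdc : dcDiff f g x = (((f x).toReal - (g x).toReal : ℝ) : EReal) := by
        rw [dcDiff]
        simp only [h, if_false]
        rw [hfx, hgx, ← EReal.coe_sub]
        simp
      rw [hdc] at hax
      -- from hax : eAffine x' y' α β x ≤ coe (...), deduce y' x < α
      by_cases hcond : y' x < α
      · have haval : eAffine x' y' α β x = ((x' x - β : ℝ) : EReal) := by
          simp [eAffine, hcond]
        rw [hsum, haval, hbval, hfx, ← EReal.coe_add, EReal.coe_le_coe_iff]
        rw [haval, EReal.coe_le_coe_iff] at hax
        have hbv := le_of_lt (hmin x _ hgx)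
        rw [hxbval]
        linarith
      · exfalso
        have : eAffine x' y' α β x = ⊤ := by simp [eAffine, hcond]
        rw [this] at hax
        exact absurd (top_le_iff.mp hax) (EReal.coe_ne_top _)
  · -- ∀ x, a x = a' x - b x
    intro x
    rw [hsum, hbval]
    by_cases hcond : y' x < α
    · have haval : eAffine x' y' α β x = ((x' x - β : ℝ) : EReal) := by
        simp [eAffine, hcond]
      rw [haval, ← EReal.coe_add, ← EReal.coe_sub, EReal.coe_eq_coe_iff]
      ring
    · have haval : eAffine x' y' α β x = ⊤ := by simp [eAffine, hcond]
      rw [haval, EReal.top_add_coe, EReal.top_sub_coe]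

end
end
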